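/- For any Dyck graph G on [n], the statistic st_G = inv_G + maj_G is Mahonian: the sum over all permutations sigma in S_n of t^{st_G(sigma)} equals the t-factorial [n]_t! = product over k=1..n of (1 + t + ... + t^{k-1}). -/

import Mathlib

open scoped Classical
open Finset Polynomial

/-- A Dyck graph: if `(i,j)` is an edge then so is every `(i',j')` with
`i ≤ i' < j' ≤ j`. -/
def DyckGraph {n : ℕ} (G : SimpleGraph (Fin n)) : Prop :=
  ∀ i j i' j' : Fin n, G.Adj i j → i ≤ i' → i' < j' → j' ≤ j → G.Adj i' j'

/-- `inv_G(σ)`: the number of edges `(i < j)` of `G` such that `i` is to the right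
of `j` in the one-line notation of `σ`. -/
noncomputable def invG {n : ℕ} (G : SimpleGraph (Fin n)) (σ : Equiv.Perm (Fin n)) : ℕ :=
  (Finset.univ.filter fun p : Fin n × Fin n =>
    p.1 < p.2 ∧ G.Adj p.1 p.2 ∧ σ⁻¹ p.2 < σ⁻¹ p.1).card

/-- `maj_G(σ)`: the sum of the (1-based) positions `i` such that `σ_i > σ_{i+1}`
and `(σ_{i+1}, σ_i)` is not an edge of `G`. -/
noncomputable def majG {n : ℕ} (G : SimpleGraph (Fin n)) (σ : Equiv.Perm (Fin n)) : ℕ :=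
  ∑ k ∈ Finset.range n,
    if h : k + 1 < n then
      (if σ ⟨k + 1, h⟩ < σ ⟨k, Nat.lt_of_succ_lt h⟩ ∧
          ¬ G.Adj (σ ⟨k + 1, h⟩) (σ ⟨k, Nat.lt_of_succ_lt h⟩) then k + 1 else 0)
    else 0

/-- The Mahonian statistic `st_G = inv_G + maj_G`. -/
noncomputable def stG {n : ℕ} (G : SimpleGraph (Fin n)) (σ : Equiv.Perm (Fin n)) : ℕ :=
  invG G σ + majG G σ


noncomputable def cA (m p : ℕ) (α : ℕ → Prop) : ℕ :=
  ((Finset.range m).filter fun q => p ≤ q ∧ α q).card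

noncomputable def cB (m p : ℕ) (D : ℕ → Prop) : ℕ :=
  ((Finset.range (m-1)).filter fun j => p ≤ j ∧ D j).card

noncomputable def cE (m p : ℕ) (α D : ℕ → Prop) : ℕ :=
  if p < m ∧ 1 ≤ p ∧ D (p-1) then 1 else if p < m ∧ ¬ α p then p+1 else 0

noncomputable def cC (m p : ℕ) (α D : ℕ → Prop) : ℕ :=
  cA m p α + cB m p D + cE m p α D

lemma filter_top_empty (m : ℕ) (P : ℕ → Prop) :
    ((Finset.range m).filter fun q => m ≤ q ∧ P q) = ∅ := by
  rw [Finset.filter_eq_empty_iff]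
  intro q hq; simp at hq; intro h; omega

lemma cA_top (m : ℕ) (α : ℕ → Prop) : cA m m α = 0 := by
  rw [cA, filter_top_empty]; rfl

lemma cB_top (m : ℕ) (D : ℕ → Prop) : cB m m D = 0 := by
  rw [cB, Finset.card_eq_zero, Finset.filter_eq_empty_iff]
  intro q hq; simp at hq; intro h; omega

lemma cC_top (m : ℕ) (α D : ℕ → Prop) : cC m m α D = 0 := by
  rw [cC, cA_top, cB_top, cE]
  rw [if_neg (by omega), if_neg (by omega)]

noncomputable def cT (m : ℕ) (α D : ℕ → Prop) : ℕ :=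
  (if α m then 1 else 0) + (if 1 ≤ m ∧ D (m-1) then 1 else 0)

lemma cC_of_lt (m p : ℕ) (hp : p < m) (α D : ℕ → Prop) :
    cC (m+1) p α D = cC m p α D + cT m α D := by
  have hA : cA (m+1) p α = cA m p α + (if α m then 1 else 0) := by
    unfold cA
    rw [Finset.range_add_one, Finset.filter_insert]
    by_cases hc : p ≤ m ∧ α m
    · rw [if_pos hc, Finset.card_insert_of_notMem (by simp), if_pos hc.2]
    · have hα : ¬ α m := fun hα => hc ⟨by omega, hα⟩
      rw [if_neg hc, if_neg hα]
      omega
  have hB : cB (m+1) p D = cB m p D + (if 1 ≤ m ∧ D (m-1) then 1 else 0) := by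
    unfold cB
    rcases Nat.eq_zero_or_pos m with hm | hm
    · subst hm; omega
    have h1 : m + 1 - 1 = (m-1) + 1 := by omega
    rw [h1, Finset.range_add_one, Finset.filter_insert]
    by_cases hc : p ≤ m - 1 ∧ D (m-1)
    · rw [if_pos hc, Finset.card_insert_of_notMem (by simp), if_pos ⟨hm, hc.2⟩]
    · have hd : ¬ (1 ≤ m ∧ D (m-1)) := fun hD => hc ⟨by omega, hD.2⟩
      rw [if_neg hc, if_neg hd]
      omega
  have hE : cE (m+1) p α D = cE m p α D := by
    have hp' : p < m + 1 := by omega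
    rw [cE, cE]
    split_ifs <;> tauto
  rw [cC, cC, hA, hB, hE, cT]; ring

lemma cC_snd_top (m : ℕ) (α D : ℕ → Prop) (h : ∀ j, D j → ¬ α (j+1)) :
    cC (m+1) m α D = if cT m α D = 0 then m+1 else 1 := by
  have hA : cA (m+1) m α = if α m then 1 else 0 := by
    unfold cA
    rw [Finset.range_add_one, Finset.filter_insert]
    by_cases hc : m ≤ m ∧ α m
    · rw [if_pos hc, Finset.card_insert_of_notMem (by simp), filter_top_empty, if_pos hc.2]
      rfl
    · have hα : ¬ α m := fun hα => hc ⟨le_refl m, hα⟩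
      rw [if_neg hc, if_neg hα, filter_top_empty]
      rfl
  have hB : cB (m+1) m D = 0 := by
    rw [cB, Finset.card_eq_zero, Finset.filter_eq_empty_iff]
    intro q hq; simp at hq; intro h2; omega
  rw [cC, hA, hB, cT]
  by_cases h1 : 1 ≤ m ∧ D (m-1)
  · have hα : ¬ α m := by
      have h2 := h (m-1) h1.2
      have hm : m - 1 + 1 = m := by omega
      rwa [hm] at h2
    have hEE : cE (m+1) m α D = 1 := by
      rw [cE, if_pos ⟨by omega, by omega, h1.2⟩]
    rw [hEE, if_neg hα, if_pos h1, if_neg (by omega)]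
  · have hEE : cE (m+1) m α D = if ¬ α m then m+1 else 0 := by
      rw [cE, if_neg (by intro hc; exact h1 ⟨by omega, hc.2.2⟩)]
      by_cases hα : α m
      · rw [if_neg (fun hc => hc.2 hα), if_neg (fun hc => hc hα)]
      · rw [if_pos ⟨by omega, hα⟩, if_pos hα]
    rw [hEE, if_neg h1]
    by_cases hα : α m
    · rw [if_pos hα, if_neg (fun hc => hc hα), if_neg (by omega)]
    · rw [if_neg hα, if_pos hα, if_pos (by omega)]
      omega

lemma key (m : ℕ) (α D : ℕ → Prop) (h : ∀ j, D j → ¬ α (j+1)) :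
    ∑ p ∈ Finset.range (m+1), (Polynomial.X : Polynomial ℚ) ^ (cC m p α D)
      = ∑ j ∈ Finset.range (m+1), (Polynomial.X : Polynomial ℚ) ^ j := by
  induction m with
  | zero => simp [cC_top]
  | succ m ih =>
    have peel : ∑ p ∈ Finset.range m, (Polynomial.X : Polynomial ℚ) ^ (cC m p α D)
        = (∑ j ∈ Finset.range (m+1), (Polynomial.X : Polynomial ℚ) ^ j) - 1 := by
      have h2 := ih
      rw [Finset.sum_range_succ, cC_top] at h2
      rw [← h2]; ring
    rw [Finset.sum_range_succ, Finset.sum_range_succ, cC_top, cC_snd_top m α D h]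
    have hshift : ∀ p ∈ Finset.range m, (Polynomial.X : Polynomial ℚ) ^ (cC (m+1) p α D)
        = (Polynomial.X : Polynomial ℚ) ^ (cC m p α D) * X ^ (cT m α D) := by
      intro p hp
      rw [cC_of_lt m p (Finset.mem_range.mp hp), pow_add]
    rw [Finset.sum_congr rfl hshift, ← Finset.sum_mul, peel]
    have ht : cT m α D = 0 ∨ cT m α D = 1 := by
      unfold cT
      by_cases h1 : 1 ≤ m ∧ D (m-1)
      · have hα : ¬ α m := by
          have h2 := h (m-1) h1.2
          have hm : m - 1 + 1 = m := by omega
          rwa [hm] at h2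
        simp [hα, h1]
      · by_cases hα : α m <;> simp [hα, h1]
    rcases ht with ht | ht <;> rw [ht]
    · rw [if_pos rfl, pow_zero, mul_one,
        Finset.sum_range_succ (fun j => (Polynomial.X : Polynomial ℚ) ^ j) (m+1)]
      ring
    · rw [if_neg (by omega), pow_one,
        Finset.sum_range_succ' (fun j => (Polynomial.X : Polynomial ℚ) ^ j) (m+1)]
      have h4 : ∑ j ∈ Finset.range (m+1), (Polynomial.X : Polynomial ℚ) ^ (j+1)
          = (∑ j ∈ Finset.range (m+1), (Polynomial.X : Polynomial ℚ) ^ j) * X := by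
        rw [Finset.sum_mul]
        exact Finset.sum_congr rfl fun j _ => by rw [pow_succ]
      rw [h4]; ring

theorem Equiv.Perm.inv_apply_self {α : Type*} (f : Equiv.Perm α) (x : α) : f⁻¹ (f x) = x :=
  Equiv.symm_apply_apply f x

theorem Equiv.Perm.apply_inv_self {α : Type*} (f : Equiv.Perm α) (x : α) : f (f⁻¹ x) = x :=
  Equiv.apply_symm_apply f x

noncomputable def ins {m : ℕ} (σ : Equiv.Perm (Fin m)) (p : Fin (m+1)) :
    Equiv.Perm (Fin (m+1)) :=
  (finSuccEquiv' p).trans ((Equiv.optionCongr σ).trans (finSuccEquivLast).symm)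

lemma lastsymm_none {m : ℕ} : (finSuccEquivLast (n:=m)).symm none = Fin.last m := by
  rw [Equiv.symm_apply_eq, finSuccEquivLast_last]

lemma lastsymm_some {m : ℕ} (i : Fin m) :
    (finSuccEquivLast (n:=m)).symm (some i) = i.castSucc := by
  rw [Equiv.symm_apply_eq, finSuccEquivLast_castSucc]

lemma ins_apply_self {m : ℕ} (σ : Equiv.Perm (Fin m)) (p : Fin (m+1)) :
    ins σ p p = Fin.last m := by
  simp only [ins, Equiv.trans_apply, finSuccEquiv'_at, Equiv.optionCongr_apply,
    Option.map_none]
  exact lastsymm_none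

lemma ins_apply_succAbove {m : ℕ} (σ : Equiv.Perm (Fin m)) (p : Fin (m+1)) (q : Fin m) :
    ins σ p (p.succAbove q) = (σ q).castSucc := by
  simp only [ins, Equiv.trans_apply, finSuccEquiv'_succAbove, Equiv.optionCongr_apply,
    Option.map_some]
  exact lastsymm_some _

lemma ins_inv_last {m : ℕ} (σ : Equiv.Perm (Fin m)) (p : Fin (m+1)) :
    (ins σ p)⁻¹ (Fin.last m) = p := by
  rw [← ins_apply_self σ p, Equiv.Perm.inv_apply_self]

lemma ins_inv_castSucc {m : ℕ} (σ : Equiv.Perm (Fin m)) (p : Fin (m+1)) (i : Fin m) :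
    (ins σ p)⁻¹ i.castSucc = p.succAbove (σ⁻¹ i) := by
  have h : ins σ p (p.succAbove (σ⁻¹ i)) = i.castSucc := by
    rw [ins_apply_succAbove, Equiv.Perm.apply_inv_self]
  rw [← h, Equiv.Perm.inv_apply_self]

lemma succAbove_of_lt {m : ℕ} (p : Fin (m+1)) (k : ℕ) (hm : k < m) (hk : (k:ℕ) < (p:ℕ)) :
    p.succAbove ⟨k, hm⟩ = ⟨k, by omega⟩ := by
  rw [Fin.succAbove]
  rw [if_pos (by rwa [Fin.lt_iff_val_lt_val])]
  rfl

lemma succAbove_of_ge {m : ℕ} (p : Fin (m+1)) (k : ℕ) (hm : k < m) (hk : (p:ℕ) ≤ k) :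
    p.succAbove ⟨k, hm⟩ = ⟨k+1, by omega⟩ := by
  rw [Fin.succAbove]
  rw [if_neg (by rw [Fin.lt_iff_val_lt_val]; simp; omega)]
  rfl

lemma ins_apply_lt {m : ℕ} (σ : Equiv.Perm (Fin m)) (p : Fin (m+1)) (k : ℕ)
    (hm : k < m) (hk : k < (p:ℕ)) (h5 : k < m+1) :
    ins σ p ⟨k, h5⟩ = (σ ⟨k, hm⟩).castSucc := by
  have h := succAbove_of_lt p k hm hk
  have h2 : (⟨k, by omega⟩ : Fin (m+1)) = ⟨k, h5⟩ := rfl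
  rw [← h2, ← h, ins_apply_succAbove]

lemma ins_apply_gt {m : ℕ} (σ : Equiv.Perm (Fin m)) (p : Fin (m+1)) (k : ℕ)
    (hk1 : (p:ℕ) < k) (hk : k < m + 1) :
    ins σ p ⟨k, hk⟩ = (σ ⟨k-1, by omega⟩).castSucc := by
  have h : p.succAbove ⟨k-1, by omega⟩ = ⟨k, hk⟩ := by
    rw [succAbove_of_ge p (k-1) (by omega) (by omega)]
    congr 1; omega
  rw [← h, ins_apply_succAbove]

lemma ins_apply_eq {m : ℕ} (σ : Equiv.Perm (Fin m)) (p : Fin (m+1)) (k : ℕ)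
    (hk : k < m + 1) (he : k = (p:ℕ)) :
    ins σ p ⟨k, hk⟩ = Fin.last m := by
  have : (⟨k, hk⟩ : Fin (m+1)) = p := by apply Fin.ext; simpa using he
  rw [this, ins_apply_self]

lemma ins_injective {m : ℕ} :
    Function.Injective (fun x : Equiv.Perm (Fin m) × Fin (m+1) => ins x.1 x.2) := by
  rintro ⟨σ, p⟩ ⟨σ', p'⟩ h
  simp only at h
  have hp : p = p' := by
    rw [← ins_inv_last σ p, ← ins_inv_last σ' p', h]
  subst hp
  have hσ : σ = σ' := by
    apply Equiv.ext
    intro q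
    have h2 : (σ q).castSucc = (σ' q).castSucc := by
      rw [← ins_apply_succAbove σ p q, ← ins_apply_succAbove σ' p q, h]
    exact Fin.castSucc_injective m h2
  rw [hσ]

lemma ins_bijective {m : ℕ} :
    Function.Bijective (fun x : Equiv.Perm (Fin m) × Fin (m+1) => ins x.1 x.2) := by
  rw [Fintype.bijective_iff_injective_and_card]
  refine ⟨ins_injective, ?_⟩
  simp [Fintype.card_perm, Nat.factorial_succ, Fintype.card_prod, mul_comm]
noncomputable def alphaP {m : ℕ} (G : SimpleGraph (Fin (m+1))) (σ : Equiv.Perm (Fin m)) :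
    ℕ → Prop :=
  fun q => ∃ h : q < m, G.Adj (σ ⟨q, h⟩).castSucc (Fin.last m)

noncomputable def DP {m : ℕ} (G : SimpleGraph (Fin (m+1))) (σ : Equiv.Perm (Fin m)) :
    ℕ → Prop :=
  fun j => ∃ h : j + 1 < m, σ ⟨j+1, h⟩ < σ ⟨j, by omega⟩ ∧
    ¬ G.Adj (σ ⟨j+1, h⟩).castSucc (σ ⟨j, by omega⟩).castSucc

lemma succAbove_val {m : ℕ} (p : Fin (m+1)) (r : Fin m) :
    ((p.succAbove r) : ℕ) = if (r:ℕ) < (p:ℕ) then (r:ℕ) else (r:ℕ)+1 := by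
  rw [Fin.succAbove]
  by_cases h : (r:ℕ) < (p:ℕ)
  · rw [if_pos (by rw [Fin.lt_iff_val_lt_val]; simpa using h), if_pos h]
    simp
  · rw [if_neg (by rw [Fin.lt_iff_val_lt_val]; simpa using h), if_neg h]
    simp

lemma lt_succAbove_iff' {m : ℕ} (p : Fin (m+1)) (r : Fin m) :
    p < p.succAbove r ↔ (p:ℕ) ≤ (r:ℕ) := by
  rw [Fin.lt_iff_val_lt_val, succAbove_val]
  split_ifs <;> omega

lemma card_range_filter_eq (m : ℕ) (P : ℕ → Prop) :
    ((Finset.range m).filter P).card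
      = (Finset.univ.filter fun r : Fin m => P (r:ℕ)).card := by
  classical
  apply (Finset.card_bij (i := fun (r : Fin m) _ => (r:ℕ)) ?_ ?_ ?_).symm
  · intro r hr
    simp only [Finset.mem_filter, Finset.mem_univ, true_and] at hr
    simp only [Finset.mem_filter, Finset.mem_range]
    exact ⟨r.isLt, hr⟩
  · intro a _ b _ h
    exact Fin.ext h
  · intro q hq
    simp only [Finset.mem_filter, Finset.mem_range] at hq
    exact ⟨⟨q, hq.1⟩, by simp [hq.2], rfl⟩

lemma inv_ins {m : ℕ} (G : SimpleGraph (Fin (m+1))) (σ : Equiv.Perm (Fin m))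
    (p : Fin (m+1)) :
    invG G (ins σ p) = invG (G.comap Fin.castSucc) σ + cA m (p:ℕ) (alphaP G σ) := by
  classical
  set τ := ins σ p with hτ
  have hsplit : (Finset.univ.filter fun x : Fin (m+1) × Fin (m+1) =>
      x.1 < x.2 ∧ G.Adj x.1 x.2 ∧ τ⁻¹ x.2 < τ⁻¹ x.1)
      = (Finset.univ.filter fun x : Fin (m+1) × Fin (m+1) =>
          (x.1 < x.2 ∧ G.Adj x.1 x.2 ∧ τ⁻¹ x.2 < τ⁻¹ x.1) ∧ x.2 = Fin.last m)
        ∪ (Finset.univ.filter fun x : Fin (m+1) × Fin (m+1) =>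
          (x.1 < x.2 ∧ G.Adj x.1 x.2 ∧ τ⁻¹ x.2 < τ⁻¹ x.1) ∧ x.2 ≠ Fin.last m) := by
    ext x
    simp only [Finset.mem_filter, Finset.mem_union, Finset.mem_univ, true_and]
    tauto
  have hdisj : Disjoint
      (Finset.univ.filter fun x : Fin (m+1) × Fin (m+1) =>
        (x.1 < x.2 ∧ G.Adj x.1 x.2 ∧ τ⁻¹ x.2 < τ⁻¹ x.1) ∧ x.2 = Fin.last m)
      (Finset.univ.filter fun x : Fin (m+1) × Fin (m+1) =>
        (x.1 < x.2 ∧ G.Adj x.1 x.2 ∧ τ⁻¹ x.2 < τ⁻¹ x.1) ∧ x.2 ≠ Fin.last m) := by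
    rw [Finset.disjoint_filter]
    tauto
  rw [invG, hsplit, Finset.card_union_of_disjoint hdisj]
  have h1 : ((Finset.univ.filter fun x : Fin (m+1) × Fin (m+1) =>
      (x.1 < x.2 ∧ G.Adj x.1 x.2 ∧ τ⁻¹ x.2 < τ⁻¹ x.1) ∧ x.2 = Fin.last m)).card
      = cA m (p:ℕ) (alphaP G σ) := by
    rw [cA]
    apply Finset.card_bij
      (i := fun (x : Fin (m+1) × Fin (m+1)) _ => ((τ⁻¹ x.1 : Fin (m+1)) : ℕ) - 1)
    · intro x hx
      simp only [Finset.mem_filter, Finset.mem_univ, true_and] at hx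
      obtain ⟨⟨hlt, hadj, hinv⟩, hlast⟩ := hx
      have hx1 : (x.1 : ℕ) < m := by
        rw [hlast, Fin.lt_iff_val_lt_val] at hlt
        simpa [Fin.last] using hlt
      set i0 : Fin m := ⟨(x.1 : ℕ), hx1⟩ with hi0
      have hcs : i0.castSucc = x.1 := by apply Fin.ext; simp [hi0]
      set r : Fin m := σ⁻¹ i0 with hrr
      have hiv : τ⁻¹ x.1 = p.succAbove r := by rw [← hcs, ins_inv_castSucc]
      have hple : (p : ℕ) ≤ (r : ℕ) := by
        rw [← lt_succAbove_iff', ← hiv]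
        have h3 : τ⁻¹ x.2 = p := by rw [hlast, ins_inv_last]
        rw [← h3]; exact hinv
      have hval : ((τ⁻¹ x.1 : Fin (m+1)) : ℕ) = (r : ℕ) + 1 := by
        rw [hiv, succAbove_val, if_neg (by omega)]
      simp only [Finset.mem_filter, Finset.mem_range, hval]
      refine ⟨by omega, by omega, r.isLt, ?_⟩
      have h5 : σ ⟨(r:ℕ)+1-1, by omega⟩ = i0 := by
        have : (⟨(r:ℕ)+1-1, by omega⟩ : Fin m) = r := by apply Fin.ext; simp
        rw [this]; exact σ.apply_inv_self i0
      rw [h5, hcs]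
      rwa [hlast] at hadj
    · intro a ha b hb hab
      simp only [Finset.mem_filter, Finset.mem_univ, true_and] at ha hb
      obtain ⟨⟨hlta, hadja, hinva⟩, hlasta⟩ := ha
      obtain ⟨⟨hltb, hadjb, hinvb⟩, hlastb⟩ := hb
      have hpa : (p:ℕ) < ((τ⁻¹ a.1 : Fin (m+1)) : ℕ) := by
        have h3 : τ⁻¹ a.2 = p := by rw [hlasta, ins_inv_last]
        rw [← h3]; exact hinva
      have hpb : (p:ℕ) < ((τ⁻¹ b.1 : Fin (m+1)) : ℕ) := by
        have h3 : τ⁻¹ b.2 = p := by rw [hlastb, ins_inv_last]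
        rw [← h3]; exact hinvb
      have hv : ((τ⁻¹ a.1 : Fin (m+1)) : ℕ) = ((τ⁻¹ b.1 : Fin (m+1)) : ℕ) := by
        omega
      have h6 : a.1 = b.1 := by
        have := Fin.ext hv
        exact τ⁻¹.injective this
      have h7 : a.2 = b.2 := by rw [hlasta, hlastb]
      exact Prod.ext h6 h7
    · intro q hq
      simp only [Finset.mem_filter, Finset.mem_range] at hq
      obtain ⟨hqm, hpq, hα⟩ := hq
      obtain ⟨hqm', hadj⟩ := hα
      refine ⟨((σ ⟨q, hqm'⟩).castSucc, Fin.last m), ?_, ?_⟩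
      · simp only [Finset.mem_filter, Finset.mem_univ, true_and]
        refine ⟨⟨Fin.castSucc_lt_last _, hadj, ?_⟩, trivial⟩
        rw [ins_inv_last, ins_inv_castSucc, Equiv.Perm.inv_apply_self,
          lt_succAbove_iff']
        exact hpq
      · show ((τ⁻¹ (σ ⟨q, hqm'⟩).castSucc : Fin (m+1)) : ℕ) - 1 = q
        rw [ins_inv_castSucc, Equiv.Perm.inv_apply_self, succAbove_val,
          if_neg (by simp; omega)]
        simp
  have h2 : ((Finset.univ.filter fun x : Fin (m+1) × Fin (m+1) =>
      (x.1 < x.2 ∧ G.Adj x.1 x.2 ∧ τ⁻¹ x.2 < τ⁻¹ x.1) ∧ x.2 ≠ Fin.last m)).card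
      = invG (G.comap Fin.castSucc) σ := by
    rw [invG]
    apply (Finset.card_bij
      (i := fun (a : Fin m × Fin m) _ => ((a.1.castSucc : Fin (m+1)), a.2.castSucc)) ?_ ?_ ?_).symm
    · intro a ha
      simp only [Finset.mem_filter, Finset.mem_univ, true_and] at ha
      obtain ⟨hlt, hadj, hinv⟩ := ha
      simp only [Finset.mem_filter, Finset.mem_univ, true_and]
      refine ⟨⟨?_, ?_, ?_⟩, (Fin.castSucc_lt_last a.2).ne⟩
      · exact Fin.castSucc_lt_castSucc_iff.mpr hlt
      · rwa [SimpleGraph.comap_adj] at hadj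
      · rw [ins_inv_castSucc, ins_inv_castSucc, Fin.succAbove_lt_succAbove_iff]
        exact hinv
    · intro a _ b _ h
      have h1 : a.1.castSucc = b.1.castSucc := congrArg Prod.fst h
      have h2 : a.2.castSucc = b.2.castSucc := congrArg Prod.snd h
      exact Prod.ext (Fin.castSucc_injective m h1) (Fin.castSucc_injective m h2)
    · intro b hb
      simp only [Finset.mem_filter, Finset.mem_univ, true_and] at hb
      obtain ⟨⟨hlt, hadj, hinv⟩, hlast⟩ := hb
      have hb2m : (b.2 : ℕ) < m := by
        have := Fin.lt_last_iff_ne_last.mpr hlast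
        simpa [Fin.lt_iff_val_lt_val] using this
      have hb1m : (b.1 : ℕ) < m := by
        rw [Fin.lt_iff_val_lt_val] at hlt; omega
      refine ⟨(⟨(b.1:ℕ), hb1m⟩, ⟨(b.2:ℕ), hb2m⟩), ?_, ?_⟩
      · have hc1 : (⟨(b.1:ℕ), hb1m⟩ : Fin m).castSucc = b.1 := by apply Fin.ext; simp
        have hc2 : (⟨(b.2:ℕ), hb2m⟩ : Fin m).castSucc = b.2 := by apply Fin.ext; simp
        simp only [Finset.mem_filter, Finset.mem_univ, true_and]
        refine ⟨?_, ?_, ?_⟩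
        · rw [Fin.lt_iff_val_lt_val] at hlt ⊢; simpa using hlt
        · rw [SimpleGraph.comap_adj, hc1, hc2]; exact hadj
        · rw [← Fin.succAbove_lt_succAbove_iff (p := p), ← ins_inv_castSucc σ p,
            ← ins_inv_castSucc σ p, hc1, hc2]
          exact hinv
      · have hc1 : (⟨(b.1:ℕ), hb1m⟩ : Fin m).castSucc = b.1 := by apply Fin.ext; simp
        have hc2 : (⟨(b.2:ℕ), hb2m⟩ : Fin m).castSucc = b.2 := by apply Fin.ext; simp
        show ((⟨(b.1:ℕ), hb1m⟩ : Fin m).castSucc, (⟨(b.2:ℕ), hb2m⟩ : Fin m).castSucc) = b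
        rw [hc1, hc2]
  rw [h1, h2]; ring
lemma maj_restrict {m : ℕ} (G : SimpleGraph (Fin (m+1))) (σ : Equiv.Perm (Fin m)) :
    majG (G.comap Fin.castSucc) σ = ∑ j ∈ Finset.range m, (if DP G σ j then j+1 else 0) := by
  rw [majG]
  apply Finset.sum_congr rfl
  intro j _
  by_cases h : j + 1 < m
  · rw [dif_pos h]
    have hiff : (σ ⟨j+1, h⟩ < σ ⟨j, Nat.lt_of_succ_lt h⟩ ∧
        ¬ (G.comap Fin.castSucc).Adj (σ ⟨j+1, h⟩) (σ ⟨j, Nat.lt_of_succ_lt h⟩))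
        ↔ DP G σ j := by
      constructor
      · intro hc
        exact ⟨h, hc.1, hc.2⟩
      · rintro ⟨h', c1, c2⟩
        exact ⟨c1, c2⟩
    exact if_congr hiff rfl rfl
  · rw [dif_neg h]
    have : ¬ DP G σ j := by rintro ⟨h', _⟩; exact h h'
    rw [if_neg this]

lemma maj_ins {m : ℕ} (G : SimpleGraph (Fin (m+1))) (σ : Equiv.Perm (Fin m))
    (p : Fin (m+1)) :
    majG G (ins σ p)
      + (if 1 ≤ (p:ℕ) ∧ DP G σ ((p:ℕ)-1) then (p:ℕ) else 0)
    = majG (G.comap Fin.castSucc) σ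
      + cB m (p:ℕ) (DP G σ)
      + (if (p:ℕ) < m ∧ ¬ alphaP G σ (p:ℕ) then (p:ℕ)+1 else 0) := by
  classical
  set P := (p:ℕ) with hP
  have hPm : P ≤ m := by have := p.isLt; omega
  set F : ℕ → ℕ := fun j => if DP G σ j then j+1 else 0 with hF
  set t : ℕ → ℕ := fun k =>
    if h : k + 1 < m+1 then
      (if (ins σ p) ⟨k+1, h⟩ < (ins σ p) ⟨k, Nat.lt_of_succ_lt h⟩ ∧
          ¬ G.Adj ((ins σ p) ⟨k+1, h⟩) ((ins σ p) ⟨k, Nat.lt_of_succ_lt h⟩) then k+1 else 0)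
    else 0 with ht
  have hmaj : majG G (ins σ p) = ∑ k ∈ Finset.range (m+1), t k := by
    rw [ht]; rfl
  have htm : t m = 0 := by simp only [ht]; exact dif_neg (by omega)
  have hFtop : ∀ j, m ≤ j + 1 → F j = 0 := by
    intro j hj
    simp only [hF]
    rw [if_neg]
    rintro ⟨h', _⟩; omega
  have ht1 : ∀ k, k + 1 < P → t k = F k := by
    intro k hk
    have hk1m : k + 1 < m := by omega
    simp only [ht, hF]
    rw [dif_pos (by omega : k + 1 < m + 1)]
    rw [ins_apply_lt σ p (k+1) hk1m (by omega) (by omega),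
        ins_apply_lt σ p k (by omega) (by omega) (by omega)]
    have hiff : ((σ ⟨k+1, hk1m⟩).castSucc < (σ ⟨k, by omega⟩).castSucc ∧
        ¬ G.Adj (σ ⟨k+1, hk1m⟩).castSucc (σ ⟨k, by omega⟩).castSucc) ↔ DP G σ k := by
      constructor
      · intro hc
        exact ⟨hk1m, Fin.castSucc_lt_castSucc_iff.mp hc.1, hc.2⟩
      · rintro ⟨h', c1, c2⟩
        exact ⟨Fin.castSucc_lt_castSucc_iff.mpr c1, c2⟩
    rw [if_congr hiff rfl rfl]
  have ht2 : ∀ k, k + 1 = P → t k = 0 := by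
    intro k hk
    simp only [ht]
    rw [dif_pos (by omega : k + 1 < m + 1)]
    rw [if_neg]
    rintro ⟨hlt, -⟩
    rw [ins_apply_eq σ p (k+1) (by omega) (by omega)] at hlt
    exact absurd hlt (Fin.not_lt.mpr (Fin.le_last _))
  have ht3 : P < m → t P = (if ¬ alphaP G σ P then P+1 else 0) := by
    intro hPlt
    simp only [ht]
    rw [dif_pos (by omega : P + 1 < m + 1)]
    rw [ins_apply_eq σ p P (by omega) hP,
        ins_apply_gt σ p (P+1) (by omega) (by omega)]
    have he : (⟨P+1-1, by omega⟩ : Fin m) = ⟨P, hPlt⟩ := by apply Fin.ext; simp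
    rw [he]
    have hiff : ((σ ⟨P, hPlt⟩).castSucc < Fin.last m ∧
        ¬ G.Adj (σ ⟨P, hPlt⟩).castSucc (Fin.last m)) ↔ ¬ alphaP G σ P := by
      constructor
      · intro hc hα
        obtain ⟨h', hadj⟩ := hα
        exact hc.2 hadj
      · intro hα
        refine ⟨Fin.castSucc_lt_last _, fun hadj => hα ⟨hPlt, hadj⟩⟩
    rw [if_congr hiff rfl rfl]
  have ht4 : ∀ k, P < k → k < m → t k = F (k-1) + (if DP G σ (k-1) then 1 else 0) := by
    intro k hk1 hk2
    simp only [ht, hF]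
    rw [dif_pos (by omega : k + 1 < m + 1)]
    rw [ins_apply_gt σ p (k+1) (by omega) (by omega),
        ins_apply_gt σ p k (by omega) (by omega)]
    have he : (⟨k+1-1, by omega⟩ : Fin m) = ⟨k, hk2⟩ := by apply Fin.ext; simp
    rw [he]
    have hk1m : k - 1 + 1 < m := by omega
    have hiff : ((σ ⟨k, hk2⟩).castSucc < (σ ⟨k-1, by omega⟩).castSucc ∧
        ¬ G.Adj (σ ⟨k, hk2⟩).castSucc (σ ⟨k-1, by omega⟩).castSucc) ↔ DP G σ (k-1) := by
      constructor
      · intro hc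
        have h1 : (⟨k-1+1, hk1m⟩ : Fin m) = ⟨k, hk2⟩ := by apply Fin.ext; simp; omega
        refine ⟨hk1m, ?_, ?_⟩
        · rw [h1]
          exact Fin.castSucc_lt_castSucc_iff.mp hc.1
        · rw [h1]
          exact hc.2
      · rintro ⟨h', c1, c2⟩
        have h1 : (⟨k-1+1, h'⟩ : Fin m) = ⟨k, hk2⟩ := by apply Fin.ext; simp; omega
        rw [h1] at c1 c2
        exact ⟨Fin.castSucc_lt_castSucc_iff.mpr c1, c2⟩
    rw [if_congr hiff rfl rfl]
    by_cases hd : DP G σ (k-1)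
    · rw [if_pos hd, if_pos hd, if_pos hd]; omega
    · rw [if_neg hd, if_neg hd, if_neg hd]
  -- assemble
  rw [hmaj, maj_restrict, ← hF]
  rw [Finset.sum_range_succ, htm, add_zero]
  rw [Finset.range_eq_Ico, ← Finset.sum_Ico_consecutive t (Nat.zero_le P) hPm,
      ← Finset.sum_Ico_consecutive F (Nat.zero_le P) hPm]
  have part1 : ∑ k ∈ Finset.Ico 0 P, t k + (if 1 ≤ P ∧ DP G σ (P-1) then P else 0)
      = ∑ k ∈ Finset.Ico 0 P, F k := by
    rcases Nat.eq_zero_or_pos P with h0 | h0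
    · simp [h0]
    · rw [← Finset.range_eq_Ico]
      have hPs : P = (P - 1) + 1 := by omega
      rw [hPs, Finset.sum_range_succ, Finset.sum_range_succ]
      rw [ht2 (P-1) (by omega), add_zero]
      have hcong : ∑ k ∈ Finset.range (P-1), t k = ∑ k ∈ Finset.range (P-1), F k := by
        apply Finset.sum_congr rfl
        intro k hk
        exact ht1 k (by simp only [Finset.mem_range] at hk; omega)
      rw [hcong]
      have heq : (if 1 ≤ (P-1)+1 ∧ DP G σ ((P-1)+1-1) then (P-1)+1 else 0) = F (P-1) := by
        simp only [hF]
        have hs : (P-1)+1-1 = P-1 := by omega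
        rw [hs]
        by_cases hd : DP G σ (P-1)
        · rw [if_pos ⟨by omega, hd⟩, if_pos hd]
        · rw [if_neg (fun hc => hd hc.2), if_neg hd]
      rw [heq]
  have part2 : ∑ k ∈ Finset.Ico P m, t k
      = (if P < m ∧ ¬ alphaP G σ P then P+1 else 0)
        + ∑ j ∈ Finset.Ico P (m-1), F j + cB m P (DP G σ) := by
    rcases eq_or_lt_of_le hPm with h0 | h0
    · rw [Finset.Ico_eq_empty (by omega), Finset.Ico_eq_empty (by omega),
        Finset.sum_empty, Finset.sum_empty, if_neg (fun hc => by omega),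
        h0, cB_top]
      rfl
    · rw [Finset.sum_eq_sum_Ico_succ_bot h0]
      have e1 : t P = (if P < m ∧ ¬ alphaP G σ P then P+1 else 0) := by
        rw [ht3 h0]
        by_cases hα : alphaP G σ P
        · rw [if_neg (fun hc => hc hα), if_neg (fun hc => hc.2 hα)]
        · rw [if_pos hα, if_pos ⟨h0, hα⟩]
      have e2 : ∑ k ∈ Finset.Ico (P+1) m, t k
          = ∑ j ∈ Finset.Ico P (m-1), (F j + (if DP G σ j then 1 else 0)) := by
        rw [Finset.sum_Ico_eq_sum_range, Finset.sum_Ico_eq_sum_range]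
        have hlen : m - (P+1) = m - 1 - P := by omega
        rw [hlen]
        apply Finset.sum_congr rfl
        intro i hi
        simp only [Finset.mem_range] at hi
        rw [ht4 (P+1+i) (by omega) (by omega)]
        have he : P+1+i-1 = P+i := by omega
        rw [he]
      have e3 : cB m P (DP G σ) = ∑ j ∈ Finset.Ico P (m-1), (if DP G σ j then 1 else 0) := by
        rw [cB, Finset.card_filter]
        rw [Finset.range_eq_Ico,
            ← Finset.sum_Ico_consecutive _ (Nat.zero_le P) (by omega : P ≤ m - 1)]
        have z1 : ∑ j ∈ Finset.Ico 0 P, (if P ≤ j ∧ DP G σ j then 1 else 0) = 0 := by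
          apply Finset.sum_eq_zero
          intro j hj
          simp only [Finset.mem_Ico] at hj
          rw [if_neg]
          rintro ⟨hc, -⟩; omega
        have z2 : ∑ j ∈ Finset.Ico P (m-1), (if P ≤ j ∧ DP G σ j then 1 else 0)
            = ∑ j ∈ Finset.Ico P (m-1), (if DP G σ j then 1 else 0) := by
          apply Finset.sum_congr rfl
          intro j hj
          simp only [Finset.mem_Ico] at hj
          by_cases hd : DP G σ j
          · rw [if_pos ⟨hj.1, hd⟩, if_pos hd]
          · rw [if_neg (fun hc => hd hc.2), if_neg hd]
        rw [z1, z2, zero_add]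
      rw [e1, e2, e3, Finset.sum_add_distrib]
      ring
  have e4 : ∑ j ∈ Finset.Ico P m, F j = ∑ j ∈ Finset.Ico P (m-1), F j := by
    rcases eq_or_lt_of_le hPm with h0 | h0
    · rw [Finset.Ico_eq_empty (by omega), Finset.Ico_eq_empty (by omega)]
    · rw [← Finset.sum_Ico_consecutive F (by omega : P ≤ m - 1) (by omega : m - 1 ≤ m)]
      have z : ∑ j ∈ Finset.Ico (m-1) m, F j = 0 := by
        apply Finset.sum_eq_zero
        intro j hj
        simp only [Finset.mem_Ico] at hj
        exact hFtop j (by omega)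
      rw [z, add_zero]
  rw [part2, e4]
  have hre : ∑ k ∈ Finset.Ico 0 P, t k
      + ((if P < m ∧ ¬ alphaP G σ P then P+1 else 0)
        + ∑ j ∈ Finset.Ico P (m-1), F j + cB m P (DP G σ))
      + (if 1 ≤ P ∧ DP G σ (P-1) then P else 0)
      = (∑ k ∈ Finset.Ico 0 P, t k + (if 1 ≤ P ∧ DP G σ (P-1) then P else 0))
        + ((if P < m ∧ ¬ alphaP G σ P then P+1 else 0)
          + ∑ j ∈ Finset.Ico P (m-1), F j + cB m P (DP G σ)) := by
    ring
  rw [hre, part1]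
  ring
lemma dyck_comap {m : ℕ} (G : SimpleGraph (Fin (m+1))) (hG : DyckGraph G) :
    DyckGraph (G.comap Fin.castSucc) := by
  intro i j i' j' hadj h1 h2 h3
  rw [SimpleGraph.comap_adj] at *
  exact hG _ _ _ _ hadj (Fin.castSucc_le_castSucc_iff.mpr h1)
    (Fin.castSucc_lt_castSucc_iff.mpr h2) (Fin.castSucc_le_castSucc_iff.mpr h3)

lemma hDalpha {m : ℕ} (G : SimpleGraph (Fin (m+1))) (hG : DyckGraph G)
    (σ : Equiv.Perm (Fin m)) :
    ∀ j, DP G σ j → ¬ alphaP G σ (j+1) := by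
  rintro j ⟨h, hlt, hnadj⟩ ⟨h2, hadj⟩
  apply hnadj
  exact hG _ _ _ _ hadj (le_refl _) (Fin.castSucc_lt_castSucc_iff.mpr hlt) (Fin.le_last _)

lemma st_ins {m : ℕ} (G : SimpleGraph (Fin (m+1))) (hG : DyckGraph G)
    (σ : Equiv.Perm (Fin m)) (p : Fin (m+1)) :
    stG G (ins σ p) = stG (G.comap Fin.castSucc) σ + cC m (p:ℕ) (alphaP G σ) (DP G σ) := by
  have hD := hDalpha G hG σ
  have hinv := inv_ins G σ p
  have hmaj := maj_ins G σ p
  have hEe : (if (p:ℕ) < m ∧ ¬ alphaP G σ (p:ℕ) then (p:ℕ)+1 else 0)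
      = cE m (p:ℕ) (alphaP G σ) (DP G σ)
        + (if 1 ≤ (p:ℕ) ∧ DP G σ ((p:ℕ)-1) then (p:ℕ) else 0) := by
    rw [cE]
    by_cases h1 : 1 ≤ (p:ℕ) ∧ DP G σ ((p:ℕ)-1)
    · have hpm : (p:ℕ) < m := by obtain ⟨h, _⟩ := h1.2; omega
      have hα : ¬ alphaP G σ (p:ℕ) := by
        have h2 := hD ((p:ℕ)-1) h1.2
        have hs : (p:ℕ)-1+1 = (p:ℕ) := by omega
        rwa [hs] at h2
      rw [if_pos ⟨hpm, hα⟩, if_pos ⟨hpm, h1.1, h1.2⟩, if_pos h1]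
      omega
    · rw [if_neg (show ¬((p:ℕ) < m ∧ 1 ≤ (p:ℕ) ∧ DP G σ ((p:ℕ)-1)) from
        fun hc => h1 ⟨hc.2.1, hc.2.2⟩), if_neg h1, add_zero]
  rw [stG, stG, hinv, cC]
  omega

theorem stmt8' (n : ℕ) : ∀ (G : SimpleGraph (Fin n)), DyckGraph G →
    ∑ σ : Equiv.Perm (Fin n), (Polynomial.X : Polynomial ℚ) ^ stG G σ =
      ∏ k ∈ Finset.range n, ∑ j ∈ Finset.range (k + 1), (Polynomial.X : Polynomial ℚ) ^ j := by
  induction n with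
  | zero =>
    intro G hG
    have h0 : ∀ σ : Equiv.Perm (Fin 0), stG G σ = 0 := by
      intro σ
      rw [stG, invG, majG]
      simp
    simp [h0]
  | succ m ih =>
    intro G hG
    have hG' := dyck_comap G hG
    rw [← Function.Bijective.sum_comp (ins_bijective (m := m))
      (fun τ => (Polynomial.X : Polynomial ℚ) ^ stG G τ)]
    rw [Fintype.sum_prod_type]
    have hstep : ∀ σ : Equiv.Perm (Fin m),
        ∑ p : Fin (m+1), (Polynomial.X : Polynomial ℚ) ^ stG G (ins σ p)
        = (Polynomial.X : Polynomial ℚ) ^ stG (G.comap Fin.castSucc) σ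
          * ∑ j ∈ Finset.range (m+1), (Polynomial.X : Polynomial ℚ) ^ j := by
      intro σ
      have hpt : ∀ p : Fin (m+1), (Polynomial.X : Polynomial ℚ) ^ stG G (ins σ p)
          = (Polynomial.X : Polynomial ℚ) ^ stG (G.comap Fin.castSucc) σ
            * Polynomial.X ^ (cC m (p:ℕ) (alphaP G σ) (DP G σ)) := by
        intro p
        rw [st_ins G hG σ p, pow_add]
      rw [Fintype.sum_congr _ _ hpt, ← Finset.mul_sum]
      congr 1
      rw [Fin.sum_univ_eq_sum_range
        (fun q => (Polynomial.X : Polynomial ℚ) ^ cC m q (alphaP G σ) (DP G σ)) (m+1)]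
      exact key m _ _ (hDalpha G hG σ)
    rw [Finset.sum_congr rfl (fun σ _ => hstep σ), ← Finset.sum_mul,
      ih (G.comap Fin.castSucc) hG', Finset.prod_range_succ]

/-- Mahonian property: `Σ_{σ ∈ S_n} t^{st_G(σ)} = [n]_t!`. -/
theorem stmt8 (n : ℕ) (G : SimpleGraph (Fin n)) (hG : DyckGraph G) :
    ∑ σ : Equiv.Perm (Fin n), (Polynomial.X : Polynomial ℚ) ^ stG G σ =
      ∏ k ∈ Finset.range n, ∑ j ∈ Finset.range (k + 1), (Polynomial.X : Polynomial ℚ) ^ j := by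
  exact stmt8' n G hG
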